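/- Fix k ≥ 1 and a function ε : {1,…,k} → {+,−}. In the monoid D = (ℤ×ℤ) × ((ℤ/2)×ℤ) with operation ((α₁,β₁),s₁) ⊛ ((α₂,β₂),s₂) = ((α₁+α₂,β₁+β₂), s₁+s₂+β₁(α₂−β₂)·(1,1)), assign δ(i) := ((1,0),(0,0)) if ε(i) = + and δ(i) := ((0,−1),(1,−1)) if ε(i) = −. Then the (ℤ/2)×ℤ-component of the product δ(k) ⊛ δ(k−1) ⊛ ⋯ ⊛ δ(1) equals (a mod 2, a), where a = −Σ_{i : ε(i) = −} i. -/

import Mathlib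

open scoped TensorProduct

noncomputable section Chrono

/-- The abelian group (ℤ/2)×(ℤ/2)×ℤ. -/
abbrev GG : Type := ZMod 2 × ZMod 2 × ℤ

/-- The ring R = ℤ[X,Y,Z,Z⁻¹]/(X²−1, Y²−1), realized as the group algebra over ℤ
of the abelian group (ℤ/2)×(ℤ/2)×ℤ. -/
abbrev RR : Type := AddMonoidAlgebra ℤ GG

/-- The unit of `RR` corresponding to a group element of `GG`. -/
def gunit (g : GG) : RRˣ where
  val := AddMonoidAlgebra.single g 1
  inv := AddMonoidAlgebra.single (-g) 1
  val_inv := by simp [AddMonoidAlgebra.single_mul_single, AddMonoidAlgebra.one_def]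
  inv_val := by simp [AddMonoidAlgebra.single_mul_single, AddMonoidAlgebra.one_def]

/-- The unit X of R (image of the first generator). -/
def Xu : RRˣ := gunit (1, 0, 0)
/-- The unit Y of R (image of the second generator). -/
def Yu : RRˣ := gunit (0, 1, 0)
/-- The unit Z of R (image of the third generator). -/
def Zu : RRˣ := gunit (0, 0, 1)

def X : RR := Xu
def Y : RR := Yu
def Z : RR := Zu

/-- ℤ_π = ℤ[π]/(π²−1). -/
abbrev Zpi : Type := Polynomial ℤ ⧸ Ideal.span {(Polynomial.X : Polynomial ℤ) ^ 2 - 1}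

/-- The class of π in ℤ_π. -/
def piE : Zpi := Ideal.Quotient.mk _ Polynomial.X

/-- The homogeneous component of degree `(a,b) ∈ (ℤ/2)×ℤ` of the splitting-degree grading
of `RR`: the ℤ-submodule spanned by the monomials `X^p Y^q Z^r` with `p+q ≡ a (mod 2)`
and `r = -b`. -/
def Rcomp (d : ZMod 2 × ℤ) : Submodule ℤ RR :=
  Submodule.span ℤ {m : RR | ∃ p q r : ℤ,
    ((p + q : ℤ) : ZMod 2) = d.1 ∧ r = -d.2 ∧ m = ((Xu ^ p * Yu ^ q * Zu ^ r : RRˣ) : RR)}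

/-- λ((a,b),(a',b')) = X^{aa'} · Y^{bb'} · Z^{ab'−a'b} ∈ Rˣ. -/
def lam (d e : ℤ × ℤ) : RRˣ :=
  Xu ^ (d.1 * e.1) * Yu ^ (d.2 * e.2) * Zu ^ (d.1 * e.2 - e.1 * d.2)

/-- The free `RR`-module A with basis `v₊ = (1,0)`, `v₋ = (0,1)`. -/
abbrev A : Type := RR × RR

/-- The basis element v₊ of A. -/
def vp : A := (1, 0)
/-- The basis element v₋ of A. -/
def vm : A := (0, 1)

/-- Multiplication μ : A ⊗ A → A, determined by μ(v₊⊗v₊)=v₊, μ(v₊⊗v₋)=v₋,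
μ(v₋⊗v₊)=XZ·v₋, μ(v₋⊗v₋)=0. -/
def mu : A ⊗[RR] A →ₗ[RR] A :=
  TensorProduct.lift <| LinearMap.mk₂ RR
    (fun u v => (u.1 * v.1, u.1 * v.2 + (X * Z) * (u.2 * v.1)))
    (by intros; simp [Prod.ext_iff]; constructor <;> ring)
    (by intros; simp [Prod.ext_iff, smul_eq_mul]; constructor <;> ring)
    (by intros; simp [Prod.ext_iff]; constructor <;> ring)
    (by intros; simp [Prod.ext_iff, smul_eq_mul]; constructor <;> ring)

/-- Comultiplication Δ : A → A ⊗ A, with Δ(v₊) = v₋⊗v₊ + YZ·(v₊⊗v₋) and Δ(v₋) = v₋⊗v₋. -/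
def Delta : A →ₗ[RR] A ⊗[RR] A :=
  (LinearMap.fst RR RR RR).smulRight (vm ⊗ₜ[RR] vp + (Y * Z) • (vp ⊗ₜ[RR] vm)) +
  (LinearMap.snd RR RR RR).smulRight (vm ⊗ₜ[RR] vm)

/-- Counit ε : A → R, ε(v₊)=0, ε(v₋)=1. -/
def eps : A →ₗ[RR] RR := LinearMap.snd RR RR RR

/-- Unit η : R → A, η(1)=v₊. -/
def eta : RR →ₗ[RR] A := (LinearMap.id : RR →ₗ[RR] RR).smulRight vp

/-- The dual basis element v₊* of A* = Hom_R(A,R). -/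
def vpd : Module.Dual RR A := LinearMap.fst RR RR RR
/-- The dual basis element v₋* of A* = Hom_R(A,R). -/
def vmd : Module.Dual RR A := LinearMap.snd RR RR RR

/-- The element f ⊗ g of (A⊗A)* under the identification (A⊗A)* ≅ A*⊗A*,
given by ⟨f⊗g, m⊗n⟩ = f(m)·g(n). -/
def pairF (f g : Module.Dual RR A) : A ⊗[RR] A →ₗ[RR] RR :=
  TensorProduct.lift <| LinearMap.mk₂ RR (fun m n => f m * g n)
    (by intros; simp [add_mul])
    (by intros; simp [smul_eq_mul]; ring)
    (by intros; simp [mul_add])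
    (by intros; simp [smul_eq_mul]; ring)
/-- The binary operation ⊛ on D = (ℤ×ℤ) × ((ℤ/2)×ℤ):
((α₁,β₁),s₁) ⊛ ((α₂,β₂),s₂) = ((α₁+α₂,β₁+β₂), s₁+s₂+β₁·(α₂−β₂)·(1,1)). -/
def Dop (x y : (ℤ × ℤ) × (ZMod 2 × ℤ)) : (ℤ × ℤ) × (ZMod 2 × ℤ) :=
  (x.1 + y.1, x.2 + y.2 + (x.1.2 * (y.1.1 - y.1.2)) • (((1 : ZMod 2), (1 : ℤ)) : ZMod 2 × ℤ))

/-- δ(i): the bidegree and splitting degree of v₊ (if ε i = false, i.e. ε(i) = +)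
or of v₋ (if ε i = true, i.e. ε(i) = −). -/
def delta12 (e : Bool) : (ℤ × ℤ) × (ZMod 2 × ℤ) :=
  if e then ((0, -1), (1, -1)) else ((1, 0), (0, 0))

/-- For k ≥ 1 and ε : {1,…,k} → {+,−} (here `true` = −), the (ℤ/2)×ℤ-component
of the product δ(k) ⊛ δ(k−1) ⊛ ⋯ ⊛ δ(1) in the monoid D equals (a mod 2, a), where
a = −Σ_{i : ε(i) = −} i. -/
lemma aux12 (ε : ℕ → Bool) (k : ℕ) :
    ∃ α β : ℤ, α - β = k ∧
      ((List.range k).map (fun j => delta12 (ε (k - j)))).foldr Dop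
          (((0, 0), (0, 0)) : (ℤ × ℤ) × (ZMod 2 × ℤ))
        = ((α, β),
            ((((- ∑ i ∈ Finset.Icc 1 k, if ε i then (i : ℤ) else 0) : ℤ) : ZMod 2),
             (- ∑ i ∈ Finset.Icc 1 k, if ε i then (i : ℤ) else 0 : ℤ))) := by
  induction k with
  | zero => exact ⟨0, 0, by simp⟩
  | succ k ih =>
    obtain ⟨α, β, hαβ, h⟩ := ih
    rw [List.range_succ_eq_map, List.map_cons, List.foldr_cons, List.map_map]
    have hmap : ((fun j => delta12 (ε (k + 1 - j))) ∘ Nat.succ)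
        = fun j => delta12 (ε (k - j)) := by
      funext j; simp [Nat.succ_sub_succ]
    rw [hmap, h]
    have hsum : (∑ i ∈ Finset.Icc 1 (k + 1), if ε i then (i : ℤ) else 0)
        = (∑ i ∈ Finset.Icc 1 k, if ε i then (i : ℤ) else 0)
          + (if ε (k + 1) then ((k : ℤ) + 1) else 0) := by
      rw [Finset.sum_Icc_succ_top (Nat.succ_le_succ (Nat.zero_le k))]
      push_cast; ring_nf
    cases he : ε (k + 1) with
    | false =>
      refine ⟨α + 1, β, by omega, ?_⟩
      simp only [Nat.sub_zero, he, hsum, Dop, delta12, Bool.false_eq_true, if_false,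
        Prod.mk_add_mk, Prod.ext_iff, Prod.smul_mk, smul_eq_mul]
      refine ⟨⟨by ring, by ring⟩, ?_, by ring⟩
      simp
    | true =>
      refine ⟨α, β - 1, by omega, ?_⟩
      simp only [Nat.sub_zero, he, hsum, Dop, delta12, if_true,
        Prod.mk_add_mk, Prod.ext_iff, Prod.smul_mk, smul_eq_mul, mul_one]
      refine ⟨⟨by ring, by ring⟩, ?_, by omega⟩
      have h1 : ((-1 : ℤ) * (α - β)) • (1 : ZMod 2) = (((-1 : ℤ) * (α - β) : ℤ) : ZMod 2) := by
        simp
      rw [h1, hαβ]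
      have key : ∀ a b : ℤ, a % 2 = b % 2 → ((a : ZMod 2) = (b : ZMod 2)) := by
        intro a b h; rwa [ZMod.intCast_eq_intCast_iff]
      have := key (1 + (-∑ i ∈ Finset.Icc 1 k, if ε i then (i : ℤ) else 0) + (-1) * k)
          (-((∑ i ∈ Finset.Icc 1 k, if ε i then (i : ℤ) else 0) + ((k : ℤ) + 1))) (by omega)
      push_cast at this
      convert this using 2 <;> push_cast <;> ring

theorem stmt12 (k : ℕ) (hk : 1 ≤ k) (ε : ℕ → Bool) :
    (((List.range k).map (fun j => delta12 (ε (k - j)))).foldr Dop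
        (((0, 0), (0, 0)) : (ℤ × ℤ) × (ZMod 2 × ℤ))).2
      = ((((- ∑ i ∈ Finset.Icc 1 k, if ε i then (i : ℤ) else 0) : ℤ) : ZMod 2),
          (- ∑ i ∈ Finset.Icc 1 k, if ε i then (i : ℤ) else 0 : ℤ)) := by
  obtain ⟨α, β, -, h⟩ := aux12 ε k
  rw [h]

end Chrono
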